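/- Let σ : ℝ → ℂ be any function and η₀ ∈ ℝ with σ(η₀) ≠ 0. Set P = σ(η₀)·conj(σ(η₀)) and K(η) = conj(σ(η))/conj(σ(η₀)). Then for all η₁, η₂ ∈ ℝ: [σ(η₁)·conj(σ(η₂))·𝟙(η₂ ≤ η₁) + σ(η₂)·conj(σ(η₁))·𝟙(η₁ < η₂)] − (σ(η₀)/conj(σ(η₀)))·conj(σ(η₁))·conj(σ(η₂)) = −2i·P·K(η₂)·Im(K(η₁))·𝟙(η₂ ≤ η₁) − 2i·P·K(η₁)·Im(K(η₂))·𝟙(η₁ < η₂), where Im(z) ∈ ℝ is coerced into ℂ. That is, the bulk-bulk propagator built from the mode function σ equals −2i·P(k)·K(η₂)·Im K(η₁)·θ(η₁ − η₂) + (η₁ ↔ η₂). -/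

import Mathlib

open Complex

/-- The wavefunction power spectrum `P = σ(η₀)·σ*(η₀)` built from a mode function. -/
noncomputable def wfPower (σ : ℝ → ℂ) (η₀ : ℝ) : ℂ := σ η₀ * (starRingEnd ℂ) (σ η₀)

/-- The bulk-boundary propagator `K(η) = σ*(η)/σ*(η₀)` built from a mode function. -/
noncomputable def wfK (σ : ℝ → ℂ) (η₀ η : ℝ) : ℂ :=
  (starRingEnd ℂ) (σ η) / (starRingEnd ℂ) (σ η₀)

lemma imC (z : ℂ) : ((z.im : ℝ) : ℂ) = (z - (starRingEnd ℂ) z) / (2 * Complex.I) := by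
  rw [Complex.sub_conj]
  field_simp
  push_cast
  ring

/-- The bulk-bulk propagator built from a mode function `σ` with `σ(η₀) ≠ 0` equals
`−2i·P·K(η₂)·Im K(η₁)·𝟙(η₂ ≤ η₁) − 2i·P·K(η₁)·Im K(η₂)·𝟙(η₁ < η₂)`. -/
theorem bulkBulk_eq_neg_two_I_P_K_ImK (σ : ℝ → ℂ) (η₀ : ℝ) (hσ : σ η₀ ≠ 0) (η₁ η₂ : ℝ) :
    (σ η₁ * (starRingEnd ℂ) (σ η₂) * (if η₂ ≤ η₁ then 1 else 0) +
        σ η₂ * (starRingEnd ℂ) (σ η₁) * (if η₁ < η₂ then 1 else 0)) -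
      (σ η₀ / (starRingEnd ℂ) (σ η₀)) * (starRingEnd ℂ) (σ η₁) * (starRingEnd ℂ) (σ η₂) =
    -2 * Complex.I * wfPower σ η₀ * wfK σ η₀ η₂ * (((wfK σ η₀ η₁).im : ℝ) : ℂ) *
        (if η₂ ≤ η₁ then 1 else 0) +
      -2 * Complex.I * wfPower σ η₀ * wfK σ η₀ η₁ * (((wfK σ η₀ η₂).im : ℝ) : ℂ) *
        (if η₁ < η₂ then 1 else 0) := by
  have hc : (starRingEnd ℂ) (σ η₀) ≠ 0 := by
    simpa using hσ
  have hI : Complex.I ≠ 0 := Complex.I_ne_zero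
  simp only [wfPower, wfK, imC, map_div₀, Complex.conj_conj]
  rcases le_or_gt η₂ η₁ with h | h
  · rw [if_pos h, if_neg (not_lt.mpr h)]
    field_simp
    ring
  · rw [if_neg (not_le.mpr h), if_pos h]
    field_simp
    ring
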